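/- If v ∈ W is nonzero, then there exists a ∈ 𝔽 such that the coefficient of the monomial X^r in the polynomial u_a(v) is nonzero. -/
import Mathlib


open MvPolynomial

private lemma aux_coeff_pow {K : Type*} [CommRing K] (c : K) (m : ℕ) :
    MvPolynomial.coeff (Finsupp.single (0 : Fin 2) m)
      ((MvPolynomial.C c * MvPolynomial.X 0 + MvPolynomial.X 1) ^ m) = c ^ m := by
  induction m with
  | zero => simp
  | succ m ih =>
    rw [pow_succ, mul_add, MvPolynomial.coeff_add]
    have h2 : MvPolynomial.coeff (Finsupp.single (0 : Fin 2) (m + 1))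
        (((MvPolynomial.C c * MvPolynomial.X 0 + MvPolynomial.X 1) ^ m) * MvPolynomial.X 1)
        = 0 := by
      rw [MvPolynomial.coeff_mul_X']
      simp [Finsupp.single_apply]
    have h1 : MvPolynomial.coeff (Finsupp.single (0 : Fin 2) (m + 1))
        (((MvPolynomial.C c * MvPolynomial.X 0 + MvPolynomial.X 1) ^ m)
          * (MvPolynomial.C c * MvPolynomial.X 0)) = c ^ (m + 1) := by
      rw [mul_left_comm, MvPolynomial.coeff_C_mul, show Finsupp.single (0 : Fin 2) (m + 1)
        = Finsupp.single (0 : Fin 2) m + Finsupp.single (0 : Fin 2) 1 from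
          (Finsupp.single_add 0 m 1), MvPolynomial.coeff_mul_X, ih, pow_succ]
      ring
    rw [h1, h2, add_zero]

/-- If `v ∈ W` is nonzero, then there is `a ∈ 𝔽` such that
the coefficient of `X^r` in `u_a v` is nonzero, where `u_a` is the `K`-algebra
endomorphism of `K[X,Y]` with `u_a X = X`, `u_a Y = ι a • X + Y`. -/
theorem stmt_10
    (p : ℕ) (hp : p.Prime) (n : ℕ) (hn : 1 ≤ n)
    (𝔽 : Type*) [Field 𝔽] [Fintype 𝔽] (hF : Fintype.card 𝔽 = p ^ n)
    (K : Type*) [Field K] [CharP K p]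
    (ι : 𝔽 →+* K)
    (r : ℕ) (hr : r < p ^ n)
    (v : MvPolynomial (Fin 2) K)
    (hv : v ∈ Submodule.span K
        {P : MvPolynomial (Fin 2) K |
          ∃ i : ℕ, i ≤ r ∧ (∀ j : ℕ, i / p ^ j % p ≤ r / p ^ j % p) ∧
            P = X 0 ^ i * X 1 ^ (r - i)})
    (hv0 : v ≠ 0) :
    ∃ a : 𝔽,
      MvPolynomial.coeff (Finsupp.single (0 : Fin 2) r)
        (aeval ![X 0, MvPolynomial.C (ι a) * X 0 + X 1] v) ≠ 0 := by
  classical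
  set S : Set (MvPolynomial (Fin 2) K) :=
    {P : MvPolynomial (Fin 2) K |
      ∃ i : ℕ, i ≤ r ∧ (∀ j : ℕ, i / p ^ j % p ≤ r / p ^ j % p) ∧
        P = X 0 ^ i * X 1 ^ (r - i)} with hS
  -- the key coefficient formula
  have key : ∀ w ∈ Submodule.span K S, ∀ c : K,
      MvPolynomial.coeff (Finsupp.single (0 : Fin 2) r)
        (aeval ![X 0, MvPolynomial.C c * X 0 + X 1] w)
        = Polynomial.eval c (aeval ![(1 : Polynomial K), Polynomial.X] w) := by
    intro w hw c
    induction hw using Submodule.span_induction with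
    | mem P hP =>
      obtain ⟨i, hi, -, rfl⟩ := hP
      rw [map_mul, map_pow, map_pow, aeval_X, aeval_X, map_mul, map_pow, map_pow,
        aeval_X, aeval_X]
      simp only [Matrix.cons_val_zero, Matrix.cons_val_one, Matrix.head_cons]
      rw [X_pow_eq_monomial (n := (0 : Fin 2)), show Finsupp.single (0 : Fin 2) r
        = Finsupp.single (0 : Fin 2) i + Finsupp.single (0 : Fin 2) (r - i) by
          rw [← Finsupp.single_add, Nat.add_sub_cancel' hi],
        coeff_monomial_mul, one_mul, aux_coeff_pow]
      simp
    | zero => simp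
    | add x y hx hy ihx ihy =>
      rw [map_add, map_add, MvPolynomial.coeff_add, Polynomial.eval_add, ihx, ihy]
    | smul a x hx ihx =>
      rw [map_smul, map_smul, MvPolynomial.coeff_smul, Polynomial.eval_smul, ihx]
  -- coefficients of w in terms of coefficients of g
  have hcoeff : ∀ w ∈ Submodule.span K S, ∀ i ≤ r,
      MvPolynomial.coeff (Finsupp.single (0 : Fin 2) i + Finsupp.single (1 : Fin 2) (r - i)) w
        = Polynomial.coeff (aeval ![(1 : Polynomial K), Polynomial.X] w) (r - i) := by
    intro w hw i hi
    induction hw using Submodule.span_induction with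
    | mem P hP =>
      obtain ⟨j, hj, -, rfl⟩ := hP
      rw [map_mul, map_pow, map_pow, aeval_X, aeval_X]
      simp only [Matrix.cons_val_zero, Matrix.cons_val_one, Matrix.head_cons, one_pow, one_mul]
      rw [X_pow_eq_monomial, X_pow_eq_monomial, monomial_mul, one_mul, coeff_monomial,
        Polynomial.coeff_X_pow]
      by_cases h : i = j
      · subst h; simp
      · rw [if_neg, if_neg]
        · omega
        · intro hcontra
          have := DFunLike.congr_fun hcontra (0 : Fin 2)
          simp [Finsupp.single_apply] at this
          exact h this.symm
    | zero => simp
    | add x y hx hy ihx ihy =>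
      rw [map_add, MvPolynomial.coeff_add, Polynomial.coeff_add, ihx, ihy]
    | smul a x hx ihx =>
      rw [map_smul, MvPolynomial.coeff_smul, Polynomial.coeff_smul, ihx]
  -- every monomial of w has the required shape
  have hsupp : ∀ w ∈ Submodule.span K S, ∀ m ∈ w.support, ∃ i, i ≤ r ∧
      m = Finsupp.single (0 : Fin 2) i + Finsupp.single (1 : Fin 2) (r - i) := by
    intro w hw
    induction hw using Submodule.span_induction with
    | mem P hP =>
      obtain ⟨j, hj, -, rfl⟩ := hP
      intro m hm
      rw [X_pow_eq_monomial, X_pow_eq_monomial, monomial_mul, one_mul,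
        support_monomial, if_neg one_ne_zero] at hm
      exact ⟨j, hj, Finset.mem_singleton.mp hm⟩
    | zero => simp
    | add x y hx hy ihx ihy =>
      intro m hm
      rcases Finset.mem_union.mp (MvPolynomial.support_add hm) with h | h
      · exact ihx m h
      · exact ihy m h
    | smul a x hx ihx =>
      intro m hm
      exact ihx m (Finsupp.support_smul hm)
  set g : Polynomial K := aeval ![(1 : Polynomial K), Polynomial.X] v with hg
  -- g is nonzero
  have hgne : g ≠ 0 := by
    intro hg0
    apply hv0
    rw [← MvPolynomial.support_eq_empty, Finset.eq_empty_iff_forall_notMem]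
    intro m hm
    obtain ⟨i, hi, rfl⟩ := hsupp v hv m hm
    rw [MvPolynomial.mem_support_iff, hcoeff v hv i hi, ← hg, hg0] at hm
    simp at hm
  -- degree bound on g
  have hdeg : ∀ w ∈ Submodule.span K S,
      (aeval ![(1 : Polynomial K), Polynomial.X] w).natDegree ≤ r := by
    intro w hw
    induction hw using Submodule.span_induction with
    | mem P hP =>
      obtain ⟨j, hj, -, rfl⟩ := hP
      rw [map_mul, map_pow, map_pow, aeval_X, aeval_X]
      simp only [Matrix.cons_val_zero, Matrix.cons_val_one, Matrix.head_cons, one_pow, one_mul]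
      calc (Polynomial.X (R := K) ^ (r - j)).natDegree ≤ r - j := Polynomial.natDegree_X_pow_le _
        _ ≤ r := Nat.sub_le r j
    | zero => simp
    | add x y hx hy ihx ihy =>
      rw [map_add]
      exact le_trans (Polynomial.natDegree_add_le _ _) (max_le ihx ihy)
    | smul a x hx ihx =>
      rw [map_smul]
      exact le_trans (Polynomial.natDegree_smul_le _ _) ihx
  -- conclude
  by_contra h
  push_neg at h
  apply hgne
  refine Polynomial.eq_zero_of_natDegree_lt_card_of_eval_eq_zero g
    (f := fun a : 𝔽 => ι a) (fun a b hab => ι.injective hab) (fun a => ?_) ?_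
  · rw [← key v hv (ι a)]
    exact h a
  · rw [hF]
    exact lt_of_le_of_lt (hdeg v hv) hr
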